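/- Let Γ be a finite group, P a finite Γ-poset and Q an induced Γ-subposet of P. Then P strongly Γ-collapses to Q if and only if the set of Γ-orbits of P \ Q can be enumerated as α_1, …, α_n in such a way that for each i = 1, …, n, every element of α_i is a beat point of the induced subposet P \ (α_1 ∪ ⋯ ∪ α_{i-1}). -/

import Mathlib

/-- A Γ-equivariant order-preserving self-map of the Γ-poset `P`, regarded as a map of the
induced subposet `A`, which fixes every point of `Q` (an element of `Def_Γ(A, Q)`). -/
def IsDefPosetMap (Γ : Type*) [Group Γ] {P : Type*} [PartialOrder P] [MulAction Γ P]
    (A Q : Set P) (f : P → P) : Prop :=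
  Set.MapsTo f A A ∧ (∀ x ∈ A, ∀ y ∈ A, x ≤ y → f x ≤ f y) ∧
    (∀ γ : Γ, ∀ x ∈ A, f (γ • x) = γ • f x) ∧ ∀ y ∈ Q, f y = y

/-- One step of a zigzag in `Def_Γ(A, Q)`: both maps belong to `Def_Γ(A, Q)` and they are
comparable in the pointwise order (on `A`). -/
def posetDefStep (Γ : Type*) [Group Γ] {P : Type*} [PartialOrder P] [MulAction Γ P]
    (A Q : Set P) (f g : P → P) : Prop :=
  IsDefPosetMap Γ A Q f ∧ IsDefPosetMap Γ A Q g ∧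
    ((∀ x ∈ A, f x ≤ g x) ∨ (∀ x ∈ A, g x ≤ f x))

/-- The induced Γ-subposet `A` of `P` strongly Γ-collapses to `Q ⊆ A`: there is a map `f` in
`Def_Γ(A, Q)`, joined to the identity by a finite zigzag of pairwise comparable elements of
`Def_Γ(A, Q)`, whose image (on `A`) is contained in `Q`.  Taking `A = Set.univ` gives the
notion "`P` strongly Γ-collapses to `Q`". -/
def StronglyCollapsesOn (Γ : Type*) [Group Γ] {P : Type*} [PartialOrder P] [MulAction Γ P]
    (A Q : Set P) : Prop :=
  ∃ f : P → P, IsDefPosetMap Γ A Q f ∧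
    Relation.ReflTransGen (posetDefStep Γ A Q) id f ∧ ∀ x ∈ A, f x ∈ Q

/-- `x` is a beat point of the induced subposet `A` of `P`: `x ∈ A` and either
`{z ∈ A | x < z}` has a minimum or `{z ∈ A | z < x}` has a maximum. -/
def IsBeatPointOn {P : Type*} [PartialOrder P] (A : Set P) (x : P) : Prop :=
  x ∈ A ∧ ((∃ y, IsLeast {z : P | z ∈ A ∧ x < z} y) ∨ (∃ y, IsGreatest {z : P | z ∈ A ∧ z < x} y))

set_option linter.unusedSectionVars false

section Helpers
variable {Γ P : Type*} [Group Γ] [Finite Γ] [PartialOrder P] [Finite P] [MulAction Γ P]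

lemma my_smul_le_iff (hmono : ∀ γ : Γ, Monotone fun x : P => γ • x) (γ : Γ) {a b : P} :
    γ • a ≤ γ • b ↔ a ≤ b :=
  ⟨fun h => by simpa using hmono γ⁻¹ h, fun h => hmono γ h⟩

lemma my_smul_lt_iff (hmono : ∀ γ : Γ, Monotone fun x : P => γ • x) (γ : Γ) {a b : P} :
    γ • a < γ • b ↔ a < b := by
  rw [lt_iff_le_not_ge, lt_iff_le_not_ge, my_smul_le_iff hmono, my_smul_le_iff hmono]

lemma not_lt_smul (hmono : ∀ γ : Γ, Monotone fun x : P => γ • x) (γ : Γ) (x : P) :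
    ¬ x < γ • x := by
  intro h
  have key : ∀ m : ℕ, x < γ ^ (m + 1) • x := by
    intro m
    induction m with
    | zero => simpa using h
    | succ m ih =>
      have h2 : γ • x < γ ^ (m + 2) • x := by
        have := (my_smul_lt_iff hmono γ).2 ih
        rwa [smul_smul, ← pow_succ'] at this
      exact h.trans h2
  have hk := key (orderOf γ - 1)
  rw [Nat.sub_add_cancel (orderOf_pos γ), pow_orderOf_eq_one, one_smul] at hk
  exact lt_irrefl _ hk

lemma orbit_eq_of_le (hmono : ∀ γ : Γ, Monotone fun x : P => γ • x) {x a b : P}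
    (ha : a ∈ MulAction.orbit Γ x) (hb : b ∈ MulAction.orbit Γ x) (hab : a ≤ b) : a = b := by
  obtain ⟨γ, rfl⟩ := ha
  obtain ⟨δ, rfl⟩ := hb
  rcases eq_or_lt_of_le hab with h | h
  · exact h
  · exfalso
    have h1 : (δ⁻¹ * γ) • x < x := by
      have := (my_smul_lt_iff hmono δ⁻¹).2 h
      simpa [mul_smul] using this
    set y := (δ⁻¹ * γ) • x with hy
    have h2 : x = (δ⁻¹ * γ)⁻¹ • y := by rw [hy, ← mul_smul]; group; simp
    rw [h2] at h1
    exact not_lt_smul hmono _ y h1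

lemma orbit_smul_mem {x a : P} (γ : Γ) (ha : a ∈ MulAction.orbit Γ x) :
    γ • a ∈ MulAction.orbit Γ x := by
  obtain ⟨δ, rfl⟩ := ha
  exact ⟨γ * δ, (mul_smul _ _ _)⟩

lemma orbit_smul_not_mem {x a : P} (γ : Γ) (ha : a ∉ MulAction.orbit Γ x) :
    γ • a ∉ MulAction.orbit Γ x := fun h => ha (by simpa using orbit_smul_mem γ⁻¹ h)

end Helpers

section Retraction
variable {Γ P : Type*} [Group Γ] [Finite Γ] [PartialOrder P] [Finite P] [MulAction Γ P]

lemma isLeast_smul (hmono : ∀ γ : Γ, Monotone fun x : P => γ • x) {A : Set P}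
    (hAinv : ∀ γ : Γ, ∀ z ∈ A, γ • z ∈ A) (γ : Γ) {z y : P}
    (h : IsLeast {w : P | w ∈ A ∧ z < w} y) :
    IsLeast {w : P | w ∈ A ∧ γ • z < w} (γ • y) := by
  obtain ⟨⟨hyA, hzy⟩, hlb⟩ := h
  refine ⟨⟨hAinv γ y hyA, (my_smul_lt_iff hmono γ).2 hzy⟩, ?_⟩
  rintro w ⟨hwA, hzw⟩
  have h1 : z < γ⁻¹ • w := by
    have := (my_smul_lt_iff hmono γ⁻¹).2 hzw
    simpa using this
  have h2 : y ≤ γ⁻¹ • w := hlb ⟨hAinv γ⁻¹ w hwA, h1⟩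
  have := hmono γ h2
  simpa using this

lemma isGreatest_smul (hmono : ∀ γ : Γ, Monotone fun x : P => γ • x) {A : Set P}
    (hAinv : ∀ γ : Γ, ∀ z ∈ A, γ • z ∈ A) (γ : Γ) {z y : P}
    (h : IsGreatest {w : P | w ∈ A ∧ w < z} y) :
    IsGreatest {w : P | w ∈ A ∧ w < γ • z} (γ • y) := by
  obtain ⟨⟨hyA, hzy⟩, hub⟩ := h
  refine ⟨⟨hAinv γ y hyA, (my_smul_lt_iff hmono γ).2 hzy⟩, ?_⟩
  rintro w ⟨hwA, hzw⟩
  have h1 : γ⁻¹ • w < z := by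
    have := (my_smul_lt_iff hmono γ⁻¹).2 hzw
    simpa using this
  have h2 : γ⁻¹ • w ≤ y := hub ⟨hAinv γ⁻¹ w hwA, h1⟩
  have := hmono γ h2
  simpa using this

/-- Elementary equivariant strong collapse: removing an orbit of beat points. -/
lemma exists_orbit_retraction (hmono : ∀ γ : Γ, Monotone fun x : P => γ • x) {A : Set P}
    (hAinv : ∀ γ : Γ, ∀ z ∈ A, γ • z ∈ A) {x : P}
    (hbeat : ∀ z ∈ MulAction.orbit Γ x, IsBeatPointOn A z) :
    ∃ r : P → P, (∀ z, z ∉ MulAction.orbit Γ x → r z = z) ∧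
      Set.MapsTo r A (A \ MulAction.orbit Γ x) ∧
      (∀ a ∈ A, ∀ b ∈ A, a ≤ b → r a ≤ r b) ∧
      (∀ γ : Γ, ∀ z : P, r (γ • z) = γ • r z) ∧
      ((∀ z, z ≤ r z) ∨ (∀ z, r z ≤ z)) := by
  have hxA : x ∈ A := (hbeat x (MulAction.mem_orbit_self x)).1
  by_cases hu : ∃ y, IsLeast {w : P | w ∈ A ∧ x < w} y
  · -- upper case
    have hu' : ∀ z ∈ MulAction.orbit Γ x, ∃ y, IsLeast {w : P | w ∈ A ∧ z < w} y := by
      rintro z ⟨γ, rfl⟩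
      obtain ⟨y, hy⟩ := hu
      exact ⟨γ • y, isLeast_smul hmono hAinv γ hy⟩
    classical
    set r : P → P := fun z =>
      if h : z ∈ MulAction.orbit Γ x then (hu' z h).choose else z with hr
    have hspec : ∀ z (h : z ∈ MulAction.orbit Γ x),
        IsLeast {w : P | w ∈ A ∧ z < w} (r z) := by
      intro z h
      rw [hr]; simp only [dif_pos h]
      exact (hu' z h).choose_spec
    have hid : ∀ z, z ∉ MulAction.orbit Γ x → r z = z := by
      intro z h; rw [hr]; simp only [dif_neg h]
    have hlt : ∀ z (h : z ∈ MulAction.orbit Γ x), z < r z := fun z h => (hspec z h).1.2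
    have hnotorb : ∀ z (h : z ∈ MulAction.orbit Γ x), r z ∉ MulAction.orbit Γ x := by
      intro z h hmem
      exact absurd (orbit_eq_of_le hmono h hmem (hlt z h).le) (hlt z h).ne
    refine ⟨r, hid, ?_, ?_, ?_, Or.inl ?_⟩
    · intro z hz
      by_cases h : z ∈ MulAction.orbit Γ x
      · exact ⟨(hspec z h).1.1, hnotorb z h⟩
      · rw [hid z h]; exact ⟨hz, h⟩
    · intro a ha b hb hab
      by_cases hA : a ∈ MulAction.orbit Γ x <;> by_cases hB : b ∈ MulAction.orbit Γ x
      · rw [orbit_eq_of_le hmono hA hB hab]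
      · rcases eq_or_lt_of_le hab with rfl | hab'
        · exact absurd hA hB
        · rw [hid b hB]
          exact (hspec a hA).2 ⟨hb, hab'⟩
      · rw [hid a hA]
        exact hab.trans (hlt b hB).le
      · rw [hid a hA, hid b hB]; exact hab
    · intro γ z
      by_cases h : z ∈ MulAction.orbit Γ x
      · have h1 := hspec z h
        have h2 := hspec (γ • z) (orbit_smul_mem γ h)
        exact h2.unique (isLeast_smul hmono hAinv γ h1)
      · rw [hid z h, hid (γ • z) (orbit_smul_not_mem γ h)]
    · intro z
      by_cases h : z ∈ MulAction.orbit Γ x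
      · exact (hlt z h).le
      · rw [hid z h]
  · -- lower case
    have hl' : ∀ z ∈ MulAction.orbit Γ x, ∃ y, IsGreatest {w : P | w ∈ A ∧ w < z} y := by
      rintro z ⟨γ, rfl⟩
      have hb := hbeat (γ • x) (MulAction.mem_orbit _ _)
      rcases hb.2 with h | h
      · exfalso
        obtain ⟨y, hy⟩ := h
        have := isLeast_smul hmono hAinv γ⁻¹ hy
        rw [inv_smul_smul] at this
        exact hu ⟨γ⁻¹ • y, this⟩
      · exact h
    classical
    set r : P → P := fun z =>
      if h : z ∈ MulAction.orbit Γ x then (hl' z h).choose else z with hr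
    have hspec : ∀ z (h : z ∈ MulAction.orbit Γ x),
        IsGreatest {w : P | w ∈ A ∧ w < z} (r z) := by
      intro z h
      rw [hr]; simp only [dif_pos h]
      exact (hl' z h).choose_spec
    have hid : ∀ z, z ∉ MulAction.orbit Γ x → r z = z := by
      intro z h; rw [hr]; simp only [dif_neg h]
    have hlt : ∀ z (h : z ∈ MulAction.orbit Γ x), r z < z := fun z h => (hspec z h).1.2
    have hnotorb : ∀ z (h : z ∈ MulAction.orbit Γ x), r z ∉ MulAction.orbit Γ x := by
      intro z h hmem
      exact absurd (orbit_eq_of_le hmono hmem h (hlt z h).le) (hlt z h).ne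
    refine ⟨r, hid, ?_, ?_, ?_, Or.inr ?_⟩
    · intro z hz
      by_cases h : z ∈ MulAction.orbit Γ x
      · exact ⟨(hspec z h).1.1, hnotorb z h⟩
      · rw [hid z h]; exact ⟨hz, h⟩
    · intro a ha b hb hab
      by_cases hA : a ∈ MulAction.orbit Γ x <;> by_cases hB : b ∈ MulAction.orbit Γ x
      · rw [orbit_eq_of_le hmono hA hB hab]
      · rw [hid b hB]
        exact (hlt a hA).le.trans hab
      · rcases eq_or_lt_of_le hab with rfl | hab'
        · exact absurd hB hA
        · rw [hid a hA]
          exact (hspec b hB).2 ⟨ha, hab'⟩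
      · rw [hid a hA, hid b hB]; exact hab
    · intro γ z
      by_cases h : z ∈ MulAction.orbit Γ x
      · have h1 := hspec z h
        have h2 := hspec (γ • z) (orbit_smul_mem γ h)
        exact h2.unique (isGreatest_smul hmono hAinv γ h1)
      · rw [hid z h, hid (γ • z) (orbit_smul_not_mem γ h)]
    · intro z
      by_cases h : z ∈ MulAction.orbit Γ x
      · exact (hlt z h).le
      · rw [hid z h]

end Retraction

section Backward
variable {Γ P : Type*} [Group Γ] [Finite Γ] [PartialOrder P] [Finite P] [MulAction Γ P]

lemma id_isDef {A Q : Set P} : IsDefPosetMap Γ A Q (id : P → P) :=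
  ⟨fun z hz => hz, fun _ _ _ _ h => h, fun _ _ _ => rfl, fun _ _ => rfl⟩

lemma backward_dir (hmono : ∀ γ : Γ, Monotone fun x : P => γ • x)
    (Q : Set P) (n : ℕ) (α : Fin n → Set P)
    (horb : ∀ i, ∃ x, x ∉ Q ∧ α i = MulAction.orbit Γ x)
    (hunion : (⋃ i, α i) = Qᶜ)
    (hbeat : ∀ i : Fin n, ∀ x ∈ α i, IsBeatPointOn ((⋃ j, ⋃ (_ : j < i), α j)ᶜ) x) :
    StronglyCollapsesOn Γ Set.univ Q := by
  classical
  set U : ℕ → Set P := fun m => ⋃ j : Fin n, ⋃ (_ : (j : ℕ) < m), α j with hU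
  have hUinv : ∀ m, ∀ γ : Γ, ∀ z ∈ U m, γ • z ∈ U m := by
    intro m γ z hz
    simp only [hU, Set.mem_iUnion] at hz ⊢
    obtain ⟨j, hj, hzj⟩ := hz
    obtain ⟨xj, -, hxj⟩ := horb j
    rw [hxj] at hzj
    refine ⟨j, hj, ?_⟩
    rw [hxj]
    exact orbit_smul_mem γ hzj
  have hUcinv : ∀ m, ∀ γ : Γ, ∀ z ∈ (U m)ᶜ, γ • z ∈ (U m)ᶜ := by
    intro m γ z hz hmem
    exact hz (by simpa using hUinv m γ⁻¹ _ hmem)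
  have key : ∀ m, m ≤ n → ∃ g : P → P, IsDefPosetMap Γ Set.univ Q g ∧
      Relation.ReflTransGen (posetDefStep Γ Set.univ Q) id g ∧ ∀ z, g z ∉ U m := by
    intro m
    induction m with
    | zero =>
      intro _
      refine ⟨id, id_isDef, Relation.ReflTransGen.refl, fun z hz => ?_⟩
      simp [hU] at hz
    | succ m ih =>
      intro hm
      obtain ⟨g, hgdef, hgchain, hgim⟩ := ih (Nat.le_of_succ_le hm)
      set k : Fin n := ⟨m, hm⟩ with hk
      obtain ⟨xk, hxkQ, hxk⟩ := horb k
      have hUk : (⋃ j, ⋃ (_ : j < k), α j) = U m := by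
        ext z
        simp only [hU, Set.mem_iUnion]
        constructor
        · rintro ⟨j, hj, hzj⟩; exact ⟨j, hj, hzj⟩
        · rintro ⟨j, hj, hzj⟩; exact ⟨j, hj, hzj⟩
      have hbeat' : ∀ z ∈ MulAction.orbit Γ xk, IsBeatPointOn ((U m)ᶜ) z := by
        intro z hz
        have := hbeat k z (by rwa [hxk])
        rwa [hUk] at this
      obtain ⟨r, hrid, hrmaps, hrmono, hreq, hrdir⟩ :=
        exists_orbit_retraction hmono (hUcinv m) hbeat'
      have hQU : Q ⊆ (U (m+1))ᶜ := by
        intro y hy hmem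
        simp only [hU, Set.mem_iUnion] at hmem
        obtain ⟨j, -, hj⟩ := hmem
        have : y ∈ Qᶜ := hunion ▸ Set.mem_iUnion.2 ⟨j, hj⟩
        exact this hy
      have hakQ : ∀ y ∈ Q, y ∉ MulAction.orbit Γ xk := by
        intro y hy hmem
        have : y ∈ Qᶜ := hunion ▸ Set.mem_iUnion.2 ⟨k, by rwa [hxk]⟩
        exact this hy
      have hgU : ∀ z, g z ∈ (U m)ᶜ := fun z => hgim z
      refine ⟨r ∘ g, ⟨fun z _ => trivial, ?_, ?_, ?_⟩, ?_, ?_⟩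
      · intro a _ b _ hab
        exact hrmono _ (hgU a) _ (hgU b) (hgdef.2.1 a trivial b trivial hab)
      · intro γ z _
        simp only [Function.comp_apply]
        rw [hgdef.2.2.1 γ z trivial, hreq]
      · intro y hy
        simp only [Function.comp_apply]
        rw [hgdef.2.2.2 y hy, hrid y (hakQ y hy)]
      · refine hgchain.tail ?_
        refine ⟨hgdef, ⟨fun z _ => trivial, ?_, ?_, ?_⟩, ?_⟩
        · intro a _ b _ hab
          exact hrmono _ (hgU a) _ (hgU b) (hgdef.2.1 a trivial b trivial hab)
        · intro γ z _
          simp only [Function.comp_apply]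
          rw [hgdef.2.2.1 γ z trivial, hreq]
        · intro y hy
          simp only [Function.comp_apply]
          rw [hgdef.2.2.2 y hy, hrid y (hakQ y hy)]
        · rcases hrdir with h | h
          · exact Or.inl fun z _ => h (g z)
          · exact Or.inr fun z _ => h (g z)
      · intro z
        have hmem : r (g z) ∈ (U m)ᶜ \ MulAction.orbit Γ xk := hrmaps (hgU z)
        intro hmem2
        simp only [hU, Set.mem_iUnion] at hmem2
        obtain ⟨j, hj, hzj⟩ := hmem2
        rcases Nat.lt_succ_iff_lt_or_eq.1 hj with hj' | hj'
        · exact hmem.1 (Set.mem_iUnion.2 ⟨j, Set.mem_iUnion.2 ⟨hj', hzj⟩⟩)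
        · have : j = k := Fin.ext hj'
          rw [this, hxk] at hzj
          exact hmem.2 hzj
  obtain ⟨g, hgdef, hgchain, hgim⟩ := key n le_rfl
  refine ⟨g, hgdef, hgchain, fun z _ => ?_⟩
  by_contra hz
  have h1 : g z ∈ ⋃ i, α i := by rw [hunion]; exact hz
  obtain ⟨j, hj⟩ := Set.mem_iUnion.1 h1
  exact hgim z (Set.mem_iUnion.2 ⟨j, Set.mem_iUnion.2 ⟨j.isLt, hj⟩⟩)

end Backward

section Forward
variable {Γ P : Type*} [Group Γ] [Finite Γ] [PartialOrder P] [Finite P] [MulAction Γ P]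

lemma exists_moving {A Q : Set P} {f : P → P}
    (h : Relation.ReflTransGen (posetDefStep Γ A Q) id f) :
    (∀ z ∈ A, f z = z) ∨ ∃ g, IsDefPosetMap Γ A Q g ∧
      ((∀ z ∈ A, g z ≤ z) ∨ (∀ z ∈ A, z ≤ g z)) ∧ ∃ z ∈ A, g z ≠ z := by
  induction h with
  | refl => exact Or.inl fun z _ => rfl
  | @tail b c hchain hstep ih =>
    rcases ih with hb | hb
    · by_cases hc : ∀ z ∈ A, c z = z
      · exact Or.inl hc
      · push_neg at hc
        obtain ⟨z, hzA, hz⟩ := hc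
        refine Or.inr ⟨c, hstep.2.1, ?_, ⟨z, hzA, hz⟩⟩
        rcases hstep.2.2 with h | h
        · exact Or.inr fun w hw => by have := h w hw; rwa [hb w hw] at this
        · exact Or.inl fun w hw => by have := h w hw; rwa [hb w hw] at this
    · exact Or.inr hb

/-- From a non-identity map comparable with the identity, extract an orbit of beat
points together with an equivariant retraction removing it. -/
lemma exists_beat_orbit (hmono : ∀ γ : Γ, Monotone fun x : P => γ • x) {A Q : Set P}
    (hAinv : ∀ γ : Γ, ∀ z ∈ A, γ • z ∈ A) {g : P → P}
    (hgdef : IsDefPosetMap Γ A Q g)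
    (hdir : (∀ z ∈ A, g z ≤ z) ∨ (∀ z ∈ A, z ≤ g z))
    (hmove : ∃ z ∈ A, g z ≠ z) :
    ∃ x : P, x ∈ A ∧ x ∉ Q ∧ MulAction.orbit Γ x ⊆ A \ Q ∧
      (∀ z ∈ MulAction.orbit Γ x, IsBeatPointOn A z) ∧
      ∃ r : P → P, (∀ z, z ∉ MulAction.orbit Γ x → r z = z) ∧
        Set.MapsTo r A (A \ MulAction.orbit Γ x) ∧
        (∀ a ∈ A, ∀ b ∈ A, a ≤ b → r a ≤ r b) ∧
        (∀ γ : Γ, ∀ z ∈ A, r (γ • z) = γ • r z) := by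
  classical
  obtain ⟨hgmaps, hgmono, hgeq, hgQ⟩ := hgdef
  set M : Set P := {z | z ∈ A ∧ g z ≠ z} with hM
  have hMne : M.Nonempty := hmove
  -- the orbit of any moved point is moved
  have horbmove : ∀ x ∈ M, ∀ z ∈ MulAction.orbit Γ x, z ∈ M := by
    rintro x ⟨hxA, hxg⟩ z ⟨γ, rfl⟩
    refine ⟨hAinv γ x hxA, ?_⟩
    rw [hgeq γ x hxA]
    intro hcon
    exact hxg (by simpa using congrArg (γ⁻¹ • ·) hcon)
  have horbA : ∀ x ∈ A, ∀ z ∈ MulAction.orbit Γ x, z ∈ A := by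
    rintro x hxA z ⟨γ, rfl⟩; exact hAinv γ x hxA
  have hMQ : ∀ z ∈ M, z ∉ Q := fun z hz hzQ => hz.2 (hgQ z hzQ)
  rcases hdir with hle | hge
  · -- g ≤ id on A : pick a minimal moved point, lower beat points
    obtain ⟨x, hxM, hxmin⟩ : ∃ x ∈ M, ∀ w ∈ M, w ≤ x → x = w := by
      obtain ⟨x, hx1, hx2⟩ := Set.Finite.exists_minimalFor id M (Set.toFinite M) hMne
      exact ⟨x, hx1, fun w hw h => le_antisymm (hx2 hw h) h⟩
    have hxA : x ∈ A := hxM.1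
    have hfix : ∀ w ∈ A, w < x → g w = w := by
      intro w hwA hwx
      by_contra hcon
      exact absurd (hxmin w ⟨hwA, hcon⟩ hwx.le) (by simpa using hwx.ne')
    have hspec : ∀ z ∈ MulAction.orbit Γ x, IsGreatest {w : P | w ∈ A ∧ w < z} (g z) := by
      rintro z ⟨γ, rfl⟩
      have hzA : γ • x ∈ A := hAinv γ x hxA
      have hgx_lt : g x < x := lt_of_le_of_ne (hle x hxA) hxM.2
      have hgz : g (γ • x) = γ • g x := hgeq γ x hxA
      constructor
      · refine ⟨hgmaps hzA, ?_⟩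
        rw [hgz]
        exact (my_smul_lt_iff hmono γ).2 hgx_lt
      · rintro w ⟨hwA, hwz⟩
        have h1 : γ⁻¹ • w < x := by
          have := (my_smul_lt_iff hmono γ⁻¹).2 hwz
          simpa using this
        have h2 : γ⁻¹ • w ∈ A := hAinv γ⁻¹ w hwA
        have h3 : γ⁻¹ • w ≤ g x := by
          rw [← hfix _ h2 h1]
          exact hgmono _ h2 _ hxA h1.le
        have := hmono γ h3
        rw [hgz]
        simpa using this
    have hmoved : ∀ z ∈ MulAction.orbit Γ x, g z < z := by
      intro z hz
      have hzM := horbmove x hxM z hz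
      exact lt_of_le_of_ne (hle z hzM.1) hzM.2
    have hgnotorb : ∀ z ∈ MulAction.orbit Γ x, g z ∉ MulAction.orbit Γ x := by
      intro z hz hcon
      exact absurd (orbit_eq_of_le hmono hcon hz (hmoved z hz).le) (hmoved z hz).ne
    refine ⟨x, hxA, hMQ x hxM, ?_, ?_, ?_⟩
    · intro z hz
      exact ⟨(horbmove x hxM z hz).1, hMQ z (horbmove x hxM z hz)⟩
    · intro z hz
      exact ⟨(horbmove x hxM z hz).1, Or.inr ⟨g z, hspec z hz⟩⟩
    · set r : P → P := fun z => if z ∈ MulAction.orbit Γ x then g z else z with hr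
      have hrdef : ∀ z, r z = if z ∈ MulAction.orbit Γ x then g z else z := fun _ => rfl
      refine ⟨r, fun z hz => by rw [hrdef, if_neg hz], ?_, ?_, ?_⟩
      · intro z hzA
        by_cases h : z ∈ MulAction.orbit Γ x
        · simp only [hrdef]; rw [if_pos h]
          exact ⟨hgmaps ((horbmove x hxM z h).1), hgnotorb z h⟩
        · simp only [hrdef]; rw [if_neg h]; exact ⟨hzA, h⟩
      · intro a haA b hbA hab
        by_cases hA : a ∈ MulAction.orbit Γ x <;> by_cases hB : b ∈ MulAction.orbit Γ x
        · rw [orbit_eq_of_le hmono hA hB hab]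
        · simp only [hrdef]; rw [if_pos hA, if_neg hB]
          exact (hgmono a haA b hbA hab).trans (hle b hbA)
        · rcases eq_or_lt_of_le hab with rfl | hab'
          · exact absurd hB hA
          · simp only [hrdef]; rw [if_neg hA, if_pos hB]
            exact (hspec b hB).2 ⟨haA, hab'⟩
        · simp only [hrdef]; rw [if_neg hA, if_neg hB]; exact hab
      · intro γ z hzA
        by_cases h : z ∈ MulAction.orbit Γ x
        · simp only [hrdef]; rw [if_pos (orbit_smul_mem γ h), if_pos h]
          exact hgeq γ z (horbmove x hxM z h).1
        · simp only [hrdef]; rw [if_neg (orbit_smul_not_mem γ h), if_neg h]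
  · -- id ≤ g on A : pick a maximal moved point, upper beat points
    obtain ⟨x, hxM, hxmax⟩ : ∃ x ∈ M, ∀ w ∈ M, x ≤ w → x = w := by
      obtain ⟨x, hx1, hx2⟩ := Set.Finite.exists_maximalFor id M (Set.toFinite M) hMne
      exact ⟨x, hx1, fun w hw h => le_antisymm h (hx2 hw h)⟩
    have hxA : x ∈ A := hxM.1
    have hfix : ∀ w ∈ A, x < w → g w = w := by
      intro w hwA hwx
      by_contra hcon
      exact absurd (hxmax w ⟨hwA, hcon⟩ hwx.le) (by simpa using hwx.ne)
    have hspec : ∀ z ∈ MulAction.orbit Γ x, IsLeast {w : P | w ∈ A ∧ z < w} (g z) := by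
      rintro z ⟨γ, rfl⟩
      have hzA : γ • x ∈ A := hAinv γ x hxA
      have hgx_lt : x < g x := lt_of_le_of_ne (hge x hxA) (Ne.symm hxM.2)
      have hgz : g (γ • x) = γ • g x := hgeq γ x hxA
      constructor
      · refine ⟨hgmaps hzA, ?_⟩
        rw [hgz]
        exact (my_smul_lt_iff hmono γ).2 hgx_lt
      · rintro w ⟨hwA, hwz⟩
        have h1 : x < γ⁻¹ • w := by
          have := (my_smul_lt_iff hmono γ⁻¹).2 hwz
          simpa using this
        have h2 : γ⁻¹ • w ∈ A := hAinv γ⁻¹ w hwA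
        have h3 : g x ≤ γ⁻¹ • w := by
          rw [← hfix _ h2 h1]
          exact hgmono _ hxA _ h2 h1.le
        have := hmono γ h3
        rw [hgz]
        simpa using this
    have hmoved : ∀ z ∈ MulAction.orbit Γ x, z < g z := by
      intro z hz
      have hzM := horbmove x hxM z hz
      exact lt_of_le_of_ne (hge z hzM.1) (Ne.symm hzM.2)
    have hgnotorb : ∀ z ∈ MulAction.orbit Γ x, g z ∉ MulAction.orbit Γ x := by
      intro z hz hcon
      exact absurd (orbit_eq_of_le hmono hz hcon (hmoved z hz).le) (hmoved z hz).ne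
    refine ⟨x, hxA, hMQ x hxM, ?_, ?_, ?_⟩
    · intro z hz
      exact ⟨(horbmove x hxM z hz).1, hMQ z (horbmove x hxM z hz)⟩
    · intro z hz
      exact ⟨(horbmove x hxM z hz).1, Or.inl ⟨g z, hspec z hz⟩⟩
    · set r : P → P := fun z => if z ∈ MulAction.orbit Γ x then g z else z with hr
      have hrdef : ∀ z, r z = if z ∈ MulAction.orbit Γ x then g z else z := fun _ => rfl
      refine ⟨r, fun z hz => by rw [hrdef, if_neg hz], ?_, ?_, ?_⟩
      · intro z hzA
        by_cases h : z ∈ MulAction.orbit Γ x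
        · simp only [hrdef]; rw [if_pos h]
          exact ⟨hgmaps ((horbmove x hxM z h).1), hgnotorb z h⟩
        · simp only [hrdef]; rw [if_neg h]; exact ⟨hzA, h⟩
      · intro a haA b hbA hab
        by_cases hA : a ∈ MulAction.orbit Γ x <;> by_cases hB : b ∈ MulAction.orbit Γ x
        · rw [orbit_eq_of_le hmono hA hB hab]
        · rcases eq_or_lt_of_le hab with rfl | hab'
          · exact absurd hA hB
          · simp only [hrdef]; rw [if_pos hA, if_neg hB]
            exact (hspec a hA).2 ⟨hbA, hab'⟩
        · simp only [hrdef]; rw [if_neg hA, if_pos hB]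
          exact hab.trans (hge b hbA)
        · simp only [hrdef]; rw [if_neg hA, if_neg hB]; exact hab
      · intro γ z hzA
        by_cases h : z ∈ MulAction.orbit Γ x
        · simp only [hrdef]; rw [if_pos (orbit_smul_mem γ h), if_pos h]
          exact hgeq γ z (horbmove x hxM z h).1
        · simp only [hrdef]; rw [if_neg (orbit_smul_not_mem γ h), if_neg h]

lemma comp_isDef {A A' Q : Set P} (hA'A : A' ⊆ A) {r : P → P}
    (hrid : ∀ z ∈ A', r z = z) (hrmaps : Set.MapsTo r A A')
    (hrmono : ∀ a ∈ A, ∀ b ∈ A, a ≤ b → r a ≤ r b)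
    (hreq : ∀ γ : Γ, ∀ z ∈ A, r (γ • z) = γ • r z)
    (hQA' : Q ⊆ A') {g : P → P} (hg : IsDefPosetMap Γ A Q g) :
    IsDefPosetMap Γ A' Q (r ∘ g) := by
  obtain ⟨hgmaps, hgmono, hgeq, hgQ⟩ := hg
  refine ⟨fun z hz => hrmaps (hgmaps (hA'A hz)), ?_, ?_, ?_⟩
  · intro a ha b hb hab
    exact hrmono _ (hgmaps (hA'A ha)) _ (hgmaps (hA'A hb)) (hgmono a (hA'A ha) b (hA'A hb) hab)
  · intro γ z hz
    simp only [Function.comp_apply]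
    rw [hgeq γ z (hA'A hz), hreq γ _ (hgmaps (hA'A hz))]
  · intro y hy
    simp only [Function.comp_apply]
    rw [hgQ y hy, hrid y (hQA' hy)]

lemma chain_transport {A A' Q : Set P} (hA'A : A' ⊆ A) {r : P → P}
    (hrid : ∀ z ∈ A', r z = z) (hrmaps : Set.MapsTo r A A')
    (hrmono : ∀ a ∈ A, ∀ b ∈ A, a ≤ b → r a ≤ r b)
    (hreq : ∀ γ : Γ, ∀ z ∈ A, r (γ • z) = γ • r z)
    (hQA' : Q ⊆ A')
    {f : P → P} (h : Relation.ReflTransGen (posetDefStep Γ A Q) id f)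
    (hiddef : IsDefPosetMap Γ A Q (id : P → P)) :
    Relation.ReflTransGen (posetDefStep Γ A' Q) id (r ∘ f) := by
  have lifted : Relation.ReflTransGen (posetDefStep Γ A' Q) (r ∘ id) (r ∘ f) := by
    refine Relation.ReflTransGen.lift (fun g => r ∘ g) ?_ _ _ h
    rintro a b ⟨hadef, hbdef, hcomp⟩
    refine ⟨comp_isDef hA'A hrid hrmaps hrmono hreq hQA' hadef,
      comp_isDef hA'A hrid hrmaps hrmono hreq hQA' hbdef, ?_⟩
    rcases hcomp with hc | hc
    · exact Or.inl fun z hz =>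
        hrmono _ (hadef.1 (hA'A hz)) _ (hbdef.1 (hA'A hz)) (hc z (hA'A hz))
    · exact Or.inr fun z hz =>
        hrmono _ (hbdef.1 (hA'A hz)) _ (hadef.1 (hA'A hz)) (hc z (hA'A hz))
  refine Relation.ReflTransGen.head ?_ lifted
  refine ⟨id_isDef, comp_isDef hA'A hrid hrmaps hrmono hreq hQA' hiddef, ?_⟩
  exact Or.inl fun z hz => by simp [hrid z hz]

lemma forward_main (hmono : ∀ γ : Γ, Monotone fun x : P => γ • x) :
    ∀ N : ℕ, ∀ A Q : Set P, (A \ Q).ncard ≤ N →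
    (∀ γ : Γ, ∀ z ∈ A, γ • z ∈ A) → Q ⊆ A →
    StronglyCollapsesOn Γ A Q →
    ∃ (n : ℕ) (α : Fin n → Set P), Function.Injective α ∧
      (∀ i, ∃ x, x ∉ Q ∧ α i = MulAction.orbit Γ x) ∧
      (⋃ i, α i) = A \ Q ∧
      ∀ i : Fin n, ∀ x ∈ α i, IsBeatPointOn (A \ ⋃ j, ⋃ (_ : j < i), α j) x := by
  intro N
  induction N with
  | zero =>
    intro A Q hcard hAinv hQA _
    have hempty : A \ Q = ∅ := by
      rw [← Set.ncard_eq_zero (Set.toFinite _)]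
      omega
    refine ⟨0, Fin.elim0, fun i => i.elim0, fun i => i.elim0, ?_, fun i => i.elim0⟩
    rw [hempty]
    exact Set.iUnion_of_empty _
  | succ N ih =>
    intro A Q hcard hAinv hQA hcol
    by_cases hempty : A \ Q = ∅
    · refine ⟨0, Fin.elim0, fun i => i.elim0, fun i => i.elim0, ?_, fun i => i.elim0⟩
      rw [hempty]
      exact Set.iUnion_of_empty _
    · obtain ⟨f, hfdef, hfchain, hfim⟩ := hcol
      have hiddef : IsDefPosetMap Γ A Q (id : P → P) := id_isDef
      rcases exists_moving hfchain with hid | ⟨g, hgdef, hgdir, hgmove⟩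
      · exfalso
        obtain ⟨z, hz⟩ := Set.nonempty_iff_ne_empty.2 hempty
        exact hz.2 (hid z hz.1 ▸ hfim z hz.1)
      · obtain ⟨x, hxA, hxQ, horbAQ, hbeatA, r, hrid, hrmaps, hrmono, hreq⟩ :=
          exists_beat_orbit hmono hAinv hgdef hgdir hgmove
        set β := MulAction.orbit Γ x with hβ
        set A' := A \ β with hA'
        have hA'A : A' ⊆ A := Set.diff_subset
        have hQA' : Q ⊆ A' := fun y hy => ⟨hQA hy, fun hmem => (horbAQ hmem).2 hy⟩
        have hrmaps' : Set.MapsTo r A A' := hrmaps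
        have hrid' : ∀ z ∈ A', r z = z := fun z hz => hrid z hz.2
        have hA'inv : ∀ γ : Γ, ∀ z ∈ A', γ • z ∈ A' := by
          rintro γ z ⟨hzA, hzβ⟩
          exact ⟨hAinv γ z hzA, orbit_smul_not_mem γ hzβ⟩
        have hcol' : StronglyCollapsesOn Γ A' Q := by
          refine ⟨r ∘ f, comp_isDef hA'A hrid' hrmaps' hrmono hreq hQA' hfdef, ?_, ?_⟩
          · exact chain_transport hA'A hrid' hrmaps' hrmono hreq hQA' hfchain hiddef
          · intro z hz
            have h1 : f z ∈ Q := hfim z (hA'A hz)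
            simp only [Function.comp_apply]
            rw [hrid' _ (hQA' h1)]
            exact h1
        have hcard' : (A' \ Q).ncard ≤ N := by
          have hsub : A' \ Q ⊂ A \ Q := by
            constructor
            · rintro z ⟨⟨hzA, _⟩, hzQ⟩; exact ⟨hzA, hzQ⟩
            · intro hcon
              have : x ∈ A' \ Q := hcon ⟨hxA, hxQ⟩
              exact this.1.2 (MulAction.mem_orbit_self x)
          have := Set.ncard_lt_ncard hsub (Set.toFinite _)
          omega
        obtain ⟨n', α', hinj', horb', hunion', hbeat'⟩ := ih A' Q hcard' hA'inv hQA' hcol'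
        set αn : Fin (n' + 1) → Set P := Fin.cases β α' with hαn
        have hsucc : ∀ i : Fin n', αn i.succ = α' i := fun i => Fin.cases_succ i
        have hzero : αn 0 = β := Fin.cases_zero
        have hsubA' : ∀ i, α' i ⊆ A' \ Q := by
          intro i
          rw [← hunion']
          exact Set.subset_iUnion α' i
        have hne' : ∀ i, (α' i).Nonempty := by
          intro i
          obtain ⟨y, -, hy⟩ := horb' i
          exact ⟨y, hy ▸ MulAction.mem_orbit_self y⟩
        have hdisj : ∀ i, β ≠ α' i := by
          intro i hcon
          obtain ⟨y, hy⟩ := hne' i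
          have h1 : y ∈ A' := (hsubA' i hy).1
          rw [← hcon] at hy
          exact h1.2 hy
        refine ⟨n' + 1, αn, ?_, ?_, ?_, ?_⟩
        · intro i j hij
          rcases Fin.eq_zero_or_eq_succ i with rfl | ⟨i', rfl⟩ <;>
            rcases Fin.eq_zero_or_eq_succ j with rfl | ⟨j', rfl⟩
          · rfl
          · rw [hzero, hsucc] at hij; exact absurd hij (hdisj j')
          · rw [hzero, hsucc] at hij; exact absurd hij.symm (hdisj i')
          · rw [hsucc, hsucc] at hij
            rw [hinj' hij]
        · intro i
          rcases Fin.eq_zero_or_eq_succ i with rfl | ⟨i', rfl⟩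
          · exact ⟨x, hxQ, hzero⟩
          · rw [hsucc]; exact horb' i'
        · ext z
          simp only [Set.mem_iUnion]
          constructor
          · rintro ⟨i, hi⟩
            rcases Fin.eq_zero_or_eq_succ i with rfl | ⟨i', rfl⟩
            · rw [hzero] at hi
              exact horbAQ hi
            · rw [hsucc] at hi
              have := hsubA' i' hi
              exact ⟨this.1.1, this.2⟩
          · intro hz
            by_cases hzβ : z ∈ β
            · exact ⟨0, hzero ▸ hzβ⟩
            · have : z ∈ ⋃ i, α' i := hunion' ▸ ⟨⟨hz.1, hzβ⟩, hz.2⟩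
              obtain ⟨i, hi⟩ := Set.mem_iUnion.1 this
              exact ⟨i.succ, (hsucc i).symm ▸ hi⟩
        · intro i z hz
          rcases Fin.eq_zero_or_eq_succ i with rfl | ⟨i', rfl⟩
          · rw [hzero] at hz
            have hU : (⋃ j, ⋃ (_ : j < (0 : Fin (n' + 1))), αn j) = ∅ := by
              simp [Fin.not_lt_zero]
            rw [hU, Set.diff_empty]
            exact hbeatA z hz
          · rw [hsucc] at hz
            have hU : (⋃ j, ⋃ (_ : j < i'.succ), αn j)
                = β ∪ ⋃ j, ⋃ (_ : j < i'), α' j := by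
              ext w
              simp only [Set.mem_iUnion, Set.mem_union]
              constructor
              · rintro ⟨j, hj, hw⟩
                rcases Fin.eq_zero_or_eq_succ j with rfl | ⟨j', rfl⟩
                · rw [hzero] at hw; exact Or.inl hw
                · rw [hsucc] at hw
                  exact Or.inr ⟨j', Fin.succ_lt_succ_iff.1 hj, hw⟩
              · rintro (hw | ⟨j, hj, hw⟩)
                · exact ⟨0, Fin.succ_pos i', hzero ▸ hw⟩
                · exact ⟨j.succ, Fin.succ_lt_succ_iff.2 hj, (hsucc j).symm ▸ hw⟩
            rw [hU, ← Set.diff_diff]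
            exact hbeat' i' z hz
  end Forward


/-- Let Γ be a finite group, P a finite Γ-poset and Q an induced Γ-subposet of P.
Then P strongly Γ-collapses to Q if and only if the set of Γ-orbits of P \ Q can be enumerated
as α_1, …, α_n in such a way that for each i, every element of α_i is a beat point of the
induced subposet P \ (α_1 ∪ ⋯ ∪ α_{i-1}). -/
theorem stronglyCollapses_iff_orbit_enumeration {Γ P : Type*} [Group Γ] [Finite Γ]
    [PartialOrder P] [Finite P] [MulAction Γ P]
    (hmono : ∀ γ : Γ, Monotone fun x : P => γ • x)
    (Q : Set P) (hQinv : ∀ γ : Γ, ∀ x ∈ Q, γ • x ∈ Q) :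
    StronglyCollapsesOn Γ Set.univ Q ↔
      ∃ (n : ℕ) (α : Fin n → Set P), Function.Injective α ∧
        (∀ i, ∃ x, x ∉ Q ∧ α i = MulAction.orbit Γ x) ∧
        (⋃ i, α i) = Qᶜ ∧
        ∀ i : Fin n, ∀ x ∈ α i, IsBeatPointOn ((⋃ j, ⋃ (_ : j < i), α j)ᶜ) x := by
  constructor
  · intro h
    obtain ⟨n, α, hinj, horb, hunion, hbeat⟩ :=
      forward_main hmono ((Set.univ \ Q).ncard) Set.univ Q le_rfl
        (fun γ z _ => trivial) (Set.subset_univ Q) h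
    refine ⟨n, α, hinj, horb, ?_, ?_⟩
    · rw [hunion, Set.compl_eq_univ_diff]
    · intro i x hx
      have := hbeat i x hx
      rwa [← Set.compl_eq_univ_diff] at this
  · rintro ⟨n, α, hinj, horb, hunion, hbeat⟩
    exact backward_dir hmono Q n α horb hunion hbeat
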